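/- If the supports supp P(x|k) for positions k = 1,…,K are pairwise disjoint compact sets and the relevance tower class is all continuous functions ℝ^m → ℝ, then the feature-based additive two-tower model is unidentifiable: for any rank offsets Δ_1,…,Δ_K ∈ ℝ there exists a continuous function g : ℝ^m → ℝ with g(x) = Δ_k for all x ∈ supp P(x|k), so that r' = r − g together with θ'_k = θ_k + Δ_k reproduces all click probabilities exactly. -/
import Mathlib


noncomputable def sigmoid (x : ℝ) : ℝ := 1 / (1 + Real.exp (-x))

/-- With pairwise disjoint compact position supports and an unrestricted class
of continuous relevance towers, the feature-based additive two-tower model is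
unidentifiable: for any rank offsets `Δ_k` there is a continuous `g` equal to
`Δ_k` on each support, and `(θ + Δ, r − g)` reproduces all click
probabilities. -/
theorem stmt_18 {m : ℕ} {K : Type*} [Fintype K]
    (supp : K → Set (EuclideanSpace ℝ (Fin m)))
    (hcpt : ∀ k, IsCompact (supp k))
    (hne : ∀ k, (supp k).Nonempty)
    (hdisj : ∀ k k', k ≠ k' → Disjoint (supp k) (supp k'))
    (θ : K → ℝ) (r : EuclideanSpace ℝ (Fin m) → ℝ) (hr : Continuous r) :
    ∀ Δ : K → ℝ, ∃ g : EuclideanSpace ℝ (Fin m) → ℝ,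
      Continuous g ∧
      (∀ k, ∀ x ∈ supp k, g x = Δ k) ∧
      (∀ k, ∀ x ∈ supp k,
        sigmoid ((θ k + Δ k) + (r x - g x)) = sigmoid (θ k + r x)) := by
  classical
  intro Δ
  -- For each k, a continuous bump function: 1 on supp k, 0 on the other supports.
  have hbump : ∀ k : K, ∃ f : C(EuclideanSpace ℝ (Fin m), ℝ),
      Set.EqOn f 0 (⋃ k' ∈ ({k}ᶜ : Set K), supp k') ∧ Set.EqOn f 1 (supp k) := by
    intro k
    have hsclosed : IsClosed (⋃ k' ∈ ({k}ᶜ : Set K), supp k') := by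
      apply Set.Finite.isClosed_biUnion (Set.toFinite _)
      exact fun k' _ => (hcpt k').isClosed
    have hd : Disjoint (⋃ k' ∈ ({k}ᶜ : Set K), supp k') (supp k) := by
      rw [Set.disjoint_left]
      rintro x hx hxk
      obtain ⟨k', hk', hxk'⟩ := Set.mem_iUnion₂.mp hx
      exact Set.disjoint_left.mp (hdisj k' k hk') hxk' hxk
    obtain ⟨f, hf0, hf1, _⟩ :=
      exists_continuous_zero_one_of_isClosed hsclosed (hcpt k).isClosed hd
    exact ⟨f, hf0, hf1⟩
  choose f hf0 hf1 using hbump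
  refine ⟨fun x => ∑ k, Δ k * f k x, by continuity, ?_, ?_⟩
  · intro k x hx
    have : ∀ k' : K, Δ k' * f k' x = if k' = k then Δ k else 0 := by
      intro k'
      by_cases h : k' = k
      · subst h
        simp [hf1 k' hx]
      · have hx' : x ∈ ⋃ j ∈ ({k'}ᶜ : Set K), supp j := by
          exact Set.mem_biUnion (by simpa using Ne.symm h) hx
        simp [hf0 k' hx', h]
    simp [this]
  · intro k x hx
    have hg : (∑ k', Δ k' * f k' x) = Δ k := by
      have : ∀ k' : K, Δ k' * f k' x = if k' = k then Δ k else 0 := by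
        intro k'
        by_cases h : k' = k
        · subst h
          simp [hf1 k' hx]
        · have hx' : x ∈ ⋃ j ∈ ({k'}ᶜ : Set K), supp j :=
            Set.mem_biUnion (by simpa using Ne.symm h) hx
          simp [hf0 k' hx', h]
      simp [this]
    show sigmoid (θ k + Δ k + (r x - ∑ k', Δ k' * f k' x)) = sigmoid (θ k + r x)
    rw [hg]
    congr 1
    ring
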